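/- Let U₁, …, U_{N+1} be real-valued random variables whose joint law is exchangeable (invariant under every permutation of the indices) and such that almost surely the values U₁, …, U_{N+1} are pairwise distinct. Then for every j ∈ {0, 1, …, N}, the probability that exactly j of the variables U₁, …, U_N are strictly smaller than U_{N+1} equals 1/(N+1); that is, the rank of U_{N+1} among the N+1 samples is uniformly distributed on {1, …, N+1}. -/

import Mathlib

open MeasureTheory ENNReal

noncomputable def rankC {n : ℕ} (k : Fin n) (x : Fin n → ℝ) : ℕ :=
  (Finset.univ.filter fun i => x i < x k).card

lemma rankC_eq_sum {n : ℕ} (k : Fin n) (x : Fin n → ℝ) :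
    rankC k x = ∑ i : Fin n, if x i < x k then 1 else 0 := by
  rw [rankC, Finset.card_filter]

lemma measurable_rankC {n : ℕ} (k : Fin n) : Measurable (rankC k) := by
  have : (rankC k : (Fin n → ℝ) → ℕ) =
      fun x => ∑ i : Fin n, if x i < x k then 1 else 0 := by
    funext x; exact rankC_eq_sum k x
  rw [this]
  exact Finset.measurable_sum _ fun i _ =>
    Measurable.ite (measurableSet_lt (measurable_pi_apply i) (measurable_pi_apply k))
      measurable_const measurable_const

lemma rankC_comp_perm {n : ℕ} (σ : Equiv.Perm (Fin n)) (k : Fin n) (x : Fin n → ℝ) :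
    rankC k (fun i => x (σ i)) = rankC (σ k) x := by
  rw [rankC_eq_sum, rankC_eq_sum]
  exact Fintype.sum_equiv σ _ _ fun i => rfl

lemma rankC_lt_rankC {n : ℕ} {x : Fin n → ℝ} {k k' : Fin n} (h : x k < x k') :
    rankC k x < rankC k' x := by
  apply Finset.card_lt_card
  constructor
  · intro i hi
    simp only [Finset.mem_filter] at *
    exact ⟨hi.1, hi.2.trans h⟩
  · intro hsub
    have := hsub (Finset.mem_filter.2 ⟨Finset.mem_univ k, h⟩)
    simp only [Finset.mem_filter] at this
    exact lt_irrefl _ this.2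

lemma rankC_injective {n : ℕ} {x : Fin n → ℝ} (hx : Function.Injective x) :
    Function.Injective fun k => rankC k x := by
  intro k k' h
  by_contra hne
  rcases lt_or_gt_of_ne (fun he => hne (hx he)) with hlt | hlt
  · exact absurd h (ne_of_lt (rankC_lt_rankC hlt))
  · exact absurd h.symm (ne_of_lt (rankC_lt_rankC hlt))

lemma rankC_le {N : ℕ} (k : Fin (N + 1)) (x : Fin (N + 1) → ℝ) :
    rankC k x ≤ N := by
  have : (Finset.univ.filter fun i => x i < x k) ⊆ Finset.univ.erase k := by
    intro i hi
    simp only [Finset.mem_filter] at hi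
    refine Finset.mem_erase.2 ⟨?_, Finset.mem_univ i⟩
    rintro rfl; exact lt_irrefl _ hi.2
  calc rankC k x ≤ (Finset.univ.erase k).card := Finset.card_le_card this
    _ = N := by simp

lemma rankC_surj {N : ℕ} {x : Fin (N + 1) → ℝ} (hx : Function.Injective x)
    {j : ℕ} (hj : j ≤ N) : ∃ k, rankC k x = j := by
  set g : Fin (N + 1) → Fin (N + 1) := fun k => ⟨rankC k x, Nat.lt_succ_of_le (rankC_le k x)⟩
  have hginj : Function.Injective g := by
    intro a b hab
    exact rankC_injective hx (congrArg Fin.val hab)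
  have hgsurj := Finite.surjective_of_injective hginj
  obtain ⟨k, hk⟩ := hgsurj ⟨j, Nat.lt_succ_of_le hj⟩
  exact ⟨k, congrArg Fin.val hk⟩

lemma rankC_last {N : ℕ} (x : Fin (N + 1) → ℝ) :
    rankC (Fin.last N) x
      = (Finset.univ.filter fun i : Fin N => x i.castSucc < x (Fin.last N)).card := by
  rw [rankC_eq_sum, Finset.card_filter, Fin.sum_univ_castSucc]
  simp
/-- Rank-uniformity lemma underlying conformal prediction: if `U 0, …, U N` are exchangeable
real-valued random variables that are a.s. pairwise distinct, then for every `j ∈ {0, …, N}`,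
the probability that exactly `j` of the first `N` variables are strictly smaller than the last
one equals `1 / (N + 1)`. -/
theorem rank_uniform_of_exchangeable
    {Ω : Type*} [MeasurableSpace Ω] (ℙ : Measure Ω) [IsProbabilityMeasure ℙ]
    (N : ℕ)
    (U : Fin (N + 1) → Ω → ℝ) (hU : ∀ i, Measurable (U i))
    (hexch : ∀ σ : Equiv.Perm (Fin (N + 1)),
      Measure.map (fun ω => fun i => U (σ i) ω) ℙ = Measure.map (fun ω => fun i => U i ω) ℙ)
    (hdist : ∀ᵐ ω ∂ℙ, Function.Injective fun i => U i ω) :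
    ∀ j : ℕ, j ≤ N →
      ℙ {ω | (Finset.univ.filter
          fun i : Fin N => U i.castSucc ω < U (Fin.last N) ω).card = j} = 1 / (N + 1) := by
  intro j hj
  -- the joint random vector
  set V : Ω → Fin (N + 1) → ℝ := fun ω i => U i ω with hV
  have hVmeas : Measurable V := measurable_pi_lambda _ hU
  -- events: rank of U k equals j
  set B : Fin (N + 1) → Set Ω := fun k => {ω | rankC k (V ω) = j} with hB
  have hBmeas : ∀ k, MeasurableSet (B k) := fun k =>
    (measurable_rankC k).comp hVmeas (measurableSet_singleton j)
  -- null set of non-injective outcomes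
  have hnull : ℙ {ω | ¬ Function.Injective fun i => U i ω} = 0 := by
    rw [← ae_iff] at *; exact hdist
  -- all B k have the same probability
  have hsame : ∀ k, ℙ (B k) = ℙ (B (Fin.last N)) := by
    intro k
    set σ : Equiv.Perm (Fin (N + 1)) := Equiv.swap k (Fin.last N) with hσ
    have hT : MeasurableSet {x : Fin (N + 1) → ℝ | rankC (Fin.last N) x = j} :=
      measurable_rankC _ (measurableSet_singleton j)
    have h1 := congrArg (fun μ => μ {x : Fin (N + 1) → ℝ | rankC (Fin.last N) x = j}) (hexch σ)
    have hσmeas : Measurable fun ω => fun i => U (σ i) ω :=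
      measurable_pi_lambda _ fun i => hU (σ i)
    rw [Measure.map_apply hσmeas hT, Measure.map_apply hVmeas hT] at h1
    have hpre : (fun ω => fun i => U (σ i) ω) ⁻¹'
        {x : Fin (N + 1) → ℝ | rankC (Fin.last N) x = j} = B k := by
      ext ω
      simp only [Set.mem_preimage, Set.mem_setOf_eq, hB]
      rw [show (fun i => U (σ i) ω) = fun i => V ω (σ i) from rfl,
        rankC_comp_perm σ (Fin.last N) (V ω)]
      have : σ (Fin.last N) = k := Equiv.swap_apply_right k (Fin.last N)
      rw [this]
    rw [hpre] at h1
    have hpre2 : V ⁻¹' {x : Fin (N + 1) → ℝ | rankC (Fin.last N) x = j} = B (Fin.last N) := rfl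
    rw [hpre2] at h1
    exact h1
  -- the events are a.e. pairwise disjoint
  have hdisj : Pairwise (Function.onFun (MeasureTheory.AEDisjoint ℙ) B) := by
    intro k k' hkk'
    refine measure_mono_null ?_ hnull
    intro ω hω
    simp only [Set.mem_inter_iff, hB, Set.mem_setOf_eq] at hω
    intro hinj
    exact hkk' (rankC_injective hinj (hω.1.trans hω.2.symm))
  -- the union has full measure
  have hcover : ℙ (⋃ k, B k) = 1 := by
    have hcompl : ℙ (⋃ k, B k)ᶜ = 0 := by
      refine measure_mono_null ?_ hnull
      intro ω hω
      simp only [Set.mem_compl_iff, Set.mem_iUnion, not_exists, hB, Set.mem_setOf_eq] at hω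
      intro hinj
      obtain ⟨k, hk⟩ := rankC_surj hinj hj
      exact hω k hk
    exact (prob_compl_eq_zero_iff (MeasurableSet.iUnion hBmeas)).1 hcompl
  -- sum of probabilities
  have hsum : ∑ k, ℙ (B k) = 1 := by
    rw [← tsum_fintype (L := .unconditional _), ← measure_iUnion₀ hdisj (fun k => (hBmeas k).nullMeasurableSet), hcover]
  have hfin : ((N : ℝ≥0∞) + 1) * ℙ (B (Fin.last N)) = 1 := by
    have : ∑ k, ℙ (B k) = ∑ k : Fin (N + 1), ℙ (B (Fin.last N)) :=
      Finset.sum_congr rfl fun k _ => hsame k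
    rw [this, Finset.sum_const, Finset.card_univ, Fintype.card_fin, nsmul_eq_mul] at hsum
    push_cast at hsum
    exact hsum
  have hEB : {ω | (Finset.univ.filter
      fun i : Fin N => U i.castSucc ω < U (Fin.last N) ω).card = j} = B (Fin.last N) := by
    ext ω
    simp only [hB, hV, Set.mem_setOf_eq, rankC_last]
  rw [hEB]
  rw [ENNReal.eq_div_iff (by exact_mod_cast Nat.succ_ne_zero N) (by finiteness)]
  exact hfin
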